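/- Product property of the conditional expectations: let Λ ⊆ Γ be finite, X ⊆ Λ, and let Z, Y ⊆ Λ with Z ∩ Y = ∅. Then for all A ∈ 𝔄_Z⁺ and B ∈ 𝔄_Y⁺: 𝔼_X^Λ(AB) = 𝔼_{X∪Y}^Λ(A) · 𝔼_{X∪Y^c}^Λ(B) = 𝔼_{X∪Z^c}^Λ(A) · 𝔼_{X∪Z}^Λ(B), where Y^c = Λ∖Y and Z^c = Λ∖Z. -/

import Mathlib

open scoped Classical

/-- The canonical anticommutation relations for a family `a x` of annihilation
operators in a C*-algebra. -/
def IsCAR {Γ A : Type*} [Ring A] [StarRing A] (a : Γ → A) : Prop :=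
  (∀ x y, a x * a y + a y * a x = 0) ∧
  (∀ x y, star (a x) * star (a y) + star (a y) * star (a x) = 0) ∧
  (∀ x y, a x * star (a y) + star (a y) * a x = if x = y then (1 : A) else 0)

/-- The four possible factors of a monomial at a site `x`:
`1`, `a x`, `a x *`, and `a x * a x`. -/
def carFactor {Γ A : Type*} [Ring A] [StarRing A] (a : Γ → A) (k : Fin 4) (x : Γ) : A :=
  match k with
  | 0 => 1
  | 1 => a x
  | 2 => star (a x)
  | 3 => star (a x) * a x

/-- The monomial with factor pattern `k` along the enumeration `l` of a finite set of sites. -/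
def carMonomial {Γ A : Type*} [Ring A] [StarRing A] (a : Γ → A) (l : List Γ)
    (k : Γ → Fin 4) : A :=
  (l.map fun x => carFactor a (k x) x).prod

/-- The number of odd factors (`a x` or `a x *`) of the monomial with pattern `k` along `l`. -/
def carOddCount {Γ : Type*} (l : List Γ) (k : Γ → Fin 4) : ℕ :=
  l.countP fun x => decide (k x = 1 ∨ k x = 2)

/-- `𝔄_X`: the linear span of the monomials supported in the finite set `X`. -/
def carSpan {Γ A : Type*} [Ring A] [StarRing A] [Algebra ℂ A] (a : Γ → A) (X : Finset Γ) :
    Submodule ℂ A :=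
  Submodule.span ℂ {m | ∃ (l : List Γ) (k : Γ → Fin 4),
    l.Nodup ∧ l.toFinset = X ∧ m = carMonomial a l k}

/-- `𝔄_X⁺`: the linear span of the even monomials supported in the finite set `X`. -/
def carSpanEven {Γ A : Type*} [Ring A] [StarRing A] [Algebra ℂ A] (a : Γ → A) (X : Finset Γ) :
    Submodule ℂ A :=
  Submodule.span ℂ {m | ∃ (l : List Γ) (k : Γ → Fin 4),
    l.Nodup ∧ l.toFinset = X ∧ Even (carOddCount l k) ∧ m = carMonomial a l k}

/-- The single-site unitaries `u_x^(0) = 1`, `u_x^(1) = a_x* + a_x`, `u_x^(2) = a_x* − a_x`,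
`u_x^(3) = 1 − 2 a_x* a_x`. -/
def uFactor {Γ A : Type*} [Ring A] [StarRing A] (a : Γ → A) (k : Fin 4) (x : Γ) : A :=
  match k with
  | 0 => 1
  | 1 => star (a x) + a x
  | 2 => star (a x) - a x
  | 3 => 1 - 2 * (star (a x) * a x)

/-- The unitary `u(α) = u_{x_1}^{(α(x_1))} ⋯ u_{x_n}^{(α(x_n))}` along the enumeration `l`
of `Λ ∖ X`. -/
def uProd {Γ A : Type*} [Ring A] [StarRing A] (a : Γ → A) (l : List Γ)
    (α : Fin l.length → Fin 4) : A :=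
  (List.ofFn fun i => uFactor a (α i) (l.get i)).prod

/-- The conditional expectation `𝔼_X^Λ(B) = 4^{−|Λ∖X|} ∑_{α} u(α)* B u(α)`, where `l` is
an enumeration of `Λ ∖ X`. -/
noncomputable def condExp {Γ A : Type*} [Ring A] [StarRing A] [Algebra ℂ A] (a : Γ → A)
    (l : List Γ) (B : A) : A :=
  ((4 : ℂ) ^ l.length)⁻¹ • ∑ α : Fin l.length → Fin 4, star (uProd a l α) * B * uProd a l α

set_option linter.unusedSectionVars false
set_option linter.unusedVariables false
set_option maxHeartbeats 800000

namespace CARaux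

/-- Anticommuting elements. -/
def AC {A : Type*} [Ring A] (p q : A) : Prop := p * q = -(q * p)

variable {A : Type*} [Ring A] {p q r s v w : A}

lemma AC.symm (h : AC p q) : AC q p := by
  unfold AC at *; rw [h, neg_neg]

lemma AC.add_left (h1 : AC p r) (h2 : AC q r) : AC (p + q) r := by
  unfold AC at *; rw [add_mul, mul_add, h1, h2, neg_add]

lemma AC.neg_left (h1 : AC p r) : AC (-p) r := by
  unfold AC at *; rw [neg_mul, mul_neg, h1]

lemma AC.sub_left (h1 : AC p r) (h2 : AC q r) : AC (p - q) r := by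
  have := h1.add_left h2.neg_left; rwa [← sub_eq_add_neg] at this

lemma AC.add_right (h1 : AC p r) (h2 : AC p s) : AC p (r + s) :=
  (h1.symm.add_left h2.symm).symm

lemma AC.sub_right (h1 : AC p r) (h2 : AC p s) : AC p (r - s) :=
  (h1.symm.sub_left h2.symm).symm

/-- A product of two elements anticommuting with `r` commutes with `r`. -/
lemma AC.mul_left_commute (h1 : AC p r) (h2 : AC q r) : Commute (p * q) r := by
  show p * q * r = r * (p * q)
  calc p * q * r = p * (q * r) := mul_assoc ..
    _ = p * -(r * q) := by rw [h2]
    _ = -(p * r) * q := by rw [mul_neg, neg_mul, mul_assoc]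
    _ = -(-(r * p)) * q := by rw [h1]
    _ = r * (p * q) := by rw [neg_neg, mul_assoc]

lemma AC.mul_right_commute (h1 : AC p r) (h2 : AC p s) : Commute p (r * s) :=
  (h1.symm.mul_left_commute h2.symm).symm

end CARaux

section CARbasic

open CARaux

variable {Γ A : Type*} [Ring A] [StarRing A] [Algebra ℂ A] {a : Γ → A}

lemma half_cancel {v : A} (h : v + v = 0) : v = 0 := by
  have h2 : (2:ℂ) • v = 0 := by rw [two_smul]; exact h
  have h3 := congrArg (fun w => ((2:ℂ))⁻¹ • w) h2
  simpa [smul_smul] using h3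

variable (hCAR : IsCAR a)
include hCAR

lemma a_sq (x : Γ) : a x * a x = 0 := half_cancel (hCAR.1 x x)

lemma astar_sq (x : Γ) : star (a x) * star (a x) = 0 := half_cancel (hCAR.2.1 x x)

lemma mix_same (x : Γ) : a x * star (a x) = 1 - star (a x) * a x := by
  have h := hCAR.2.2 x x
  simp only [if_pos rfl] at h
  exact eq_sub_of_add_eq h

lemma mix_same' (x : Γ) : star (a x) * a x = 1 - a x * star (a x) := by
  have h := hCAR.2.2 x x
  simp only [if_pos rfl] at h
  rw [add_comm] at h
  exact eq_sub_of_add_eq h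

variable [DecidableEq Γ]

lemma ac_aa {x y : Γ} (h : x ≠ y) : AC (a x) (a y) :=
  eq_neg_of_add_eq_zero_left (hCAR.1 x y)

lemma ac_ss {x y : Γ} (h : x ≠ y) : AC (star (a x)) (star (a y)) :=
  eq_neg_of_add_eq_zero_left (hCAR.2.1 x y)

lemma ac_as {x y : Γ} (h : x ≠ y) : AC (a x) (star (a y)) := by
  have := hCAR.2.2 x y
  rw [if_neg h] at this
  exact eq_neg_of_add_eq_zero_left this

lemma ac_sa {x y : Γ} (h : x ≠ y) : AC (star (a x)) (a y) := by
  have := hCAR.2.2 y x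
  rw [if_neg (Ne.symm h)] at this
  rw [add_comm] at this
  exact eq_neg_of_add_eq_zero_left this

/-- The generators at site `y` commute with even `uFactor`s at a different site. -/
lemma even_u_commute {x y : Γ} (h : x ≠ y) (k : Fin 4) (hk : k = 0 ∨ k = 3) :
    Commute (uFactor a k x) (a y) ∧ Commute (uFactor a k x) (star (a y)) := by
  rcases hk with rfl | rfl
  · exact ⟨Commute.one_left _, Commute.one_left _⟩
  · have h1 : Commute (star (a x) * a x) (a y) :=
      (ac_sa hCAR h).mul_left_commute (ac_aa hCAR h)
    have h2 : Commute (star (a x) * a x) (star (a y)) :=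
      (ac_ss hCAR h).mul_left_commute (ac_as hCAR h)
    constructor
    · exact (Commute.one_left _).sub_left (((Commute.ofNat_left 2 _)).mul_left h1)
    · exact (Commute.one_left _).sub_left (((Commute.ofNat_left 2 _)).mul_left h2)

lemma odd_u_ac {x y : Γ} (h : x ≠ y) (k : Fin 4) (hk : k = 1 ∨ k = 2) :
    AC (uFactor a k x) (a y) ∧ AC (uFactor a k x) (star (a y)) := by
  rcases hk with rfl | rfl
  · exact ⟨(ac_sa hCAR h).add_left (ac_aa hCAR h),
      (ac_ss hCAR h).add_left (ac_as hCAR h)⟩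
  · exact ⟨(ac_sa hCAR h).sub_left (ac_aa hCAR h),
      (ac_ss hCAR h).sub_left (ac_as hCAR h)⟩

omit hCAR in
/-- If something commutes with `a x` and `star (a x)`, it commutes with all `uFactor`s. -/
lemma commute_uFactor {x : Γ} {C : A} (h1 : Commute (a x) C) (h2 : Commute (star (a x)) C)
    (k : Fin 4) : Commute (uFactor a k x) C := by
  fin_cases k
  · exact Commute.one_left _
  · exact h2.add_left h1
  · exact h2.sub_left h1
  · exact (Commute.one_left _).sub_left ((Commute.ofNat_left 2 _).mul_left (h2.mul_left h1))

omit hCAR in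
lemma uFactor_star (k : Fin 4) (x : Γ) :
    star (uFactor a k x) = uFactor a k x ∨ star (uFactor a k x) = -(uFactor a k x) := by
  fin_cases k
  · left; simp [uFactor]
  · left; simp [uFactor, add_comm]
  · right; simp [uFactor]
  · left
    simp only [uFactor, star_sub, star_one, star_mul, star_star]
    rw [(Commute.ofNat_left 2 (star (a x) * a x)).eq]
    congr 1
    rw [star_ofNat]

/-- Sign-commutation of `uFactor`s at distinct sites. -/
lemma uFactor_signComm {x y : Γ} (h : x ≠ y) (k j : Fin 4) :
    uFactor a k x * uFactor a j y = uFactor a j y * uFactor a k x ∨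
    uFactor a k x * uFactor a j y = -(uFactor a j y * uFactor a k x) := by
  have hk : k = 0 ∨ k = 3 ∨ k = 1 ∨ k = 2 := by fin_cases k <;> simp
  have hj : j = 0 ∨ j = 3 ∨ j = 1 ∨ j = 2 := by fin_cases j <;> simp
  rcases hk with hk | hk | hk
  · left
    obtain ⟨h1, h2⟩ := even_u_commute hCAR h k (Or.inl hk)
    exact (commute_uFactor h1.symm h2.symm j).symm.eq
  · left
    obtain ⟨h1, h2⟩ := even_u_commute hCAR h k (Or.inr hk)
    exact (commute_uFactor h1.symm h2.symm j).symm.eq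
  · -- k odd
    rcases hj with hj | hj | hj
    · left
      obtain ⟨h1, h2⟩ := even_u_commute hCAR (Ne.symm h) j (Or.inl hj)
      exact (commute_uFactor h1.symm h2.symm k).eq
    · left
      obtain ⟨h1, h2⟩ := even_u_commute hCAR (Ne.symm h) j (Or.inr hj)
      exact (commute_uFactor h1.symm h2.symm k).eq
    · right
      obtain ⟨h1, h2⟩ := odd_u_ac hCAR h k hk
      have : AC (uFactor a k x) (uFactor a j y) := by
        rcases hj with rfl | rfl
        · exact h2.add_right h1
        · exact h2.sub_right h1
      exact this


end CARbasic

section Stage2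
open CARaux
variable {Γ A : Type*} [Ring A] [StarRing A] [Algebra ℂ A] {a : Γ → A}
variable (hCAR : IsCAR a)
include hCAR

lemma gen_factor_comm {x y : Γ} (h : x ≠ y) {g : A} (hg : g = a x ∨ g = star (a x)) (j : Fin 4)
    (hj : ¬(j = 1 ∨ j = 2)) : Commute g (carFactor a j y) := by
  fin_cases j
  · exact Commute.one_right g
  · simp at hj
  · simp at hj
  · rcases hg with rfl | rfl
    · exact (ac_as hCAR h).mul_right_commute (ac_aa hCAR h)
    · exact (ac_ss hCAR h).mul_right_commute (ac_sa hCAR h)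

lemma gen_factor_ac {x y : Γ} (h : x ≠ y) {g : A} (hg : g = a x ∨ g = star (a x)) (j : Fin 4)
    (hj : j = 1 ∨ j = 2) : AC g (carFactor a j y) := by
  rcases hj with rfl | rfl
  · rcases hg with rfl | rfl
    · exact ac_aa hCAR h
    · exact ac_sa hCAR h
  · rcases hg with rfl | rfl
    · exact ac_as hCAR h
    · exact ac_ss hCAR h

lemma gen_mul_monomial {x : Γ} {g : A} (hg : g = a x ∨ g = star (a x))
    (l : List Γ) (hx : x ∉ l) (k : Γ → Fin 4) :
    g * carMonomial a l k = ((-1:ℂ)^(carOddCount l k)) • (carMonomial a l k * g) := by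
  induction l with
  | nil => simp [carMonomial, carOddCount]
  | cons y l ih =>
    have hxy : x ≠ y := by rintro rfl; exact hx (List.mem_cons_self)
    have hxl : x ∉ l := fun m => hx (List.mem_cons_of_mem _ m)
    have hm : carMonomial a (y::l) k = carFactor a (k y) y * carMonomial a l k := by
      simp [carMonomial]
    rw [hm]
    by_cases hj : k y = 1 ∨ k y = 2
    · have hcount : carOddCount (y::l) k = carOddCount l k + 1 := by
        simp [carOddCount, List.countP_cons, hj]
      have hac := gen_factor_ac hCAR hxy hg (k y) hj
      rw [hcount, ← mul_assoc, hac, neg_mul, mul_assoc, ih hxl,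
        mul_smul_comm, pow_succ, mul_smul, neg_one_smul, smul_neg, ← mul_assoc]
    · have hcount : carOddCount (y::l) k = carOddCount l k := by
        simp [carOddCount, List.countP_cons, hj]
      have hc := gen_factor_comm hCAR hxy hg (k y) hj
      rw [hcount, ← mul_assoc, hc.eq, mul_assoc, ih hxl,
        mul_smul_comm, mul_assoc]

lemma commute_evenSpan {Y : Finset Γ} {x : Γ} (hx : x ∉ Y) {C : A}
    (hC : C ∈ carSpanEven a Y) : Commute (a x) C ∧ Commute (star (a x)) C := by
  refine Submodule.span_induction (fun m hm => ?_)
    ⟨Commute.zero_right _, Commute.zero_right _⟩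
    (fun u v _ _ hu hv => ⟨hu.1.add_right hv.1, hu.2.add_right hv.2⟩)
    (fun c u _ hu => ⟨hu.1.smul_right c, hu.2.smul_right c⟩) hC
  obtain ⟨l, k, hnd, hset, heven, rfl⟩ := hm
  have hxl : x ∉ l := by
    intro m; exact hx (hset ▸ List.mem_toFinset.mpr m)
  constructor
  · have h1 := gen_mul_monomial hCAR (Or.inl rfl) l hxl k
    rwa [Even.neg_one_pow heven, one_smul] at h1
  · have h1 := gen_mul_monomial hCAR (Or.inr rfl) l hxl k
    rwa [Even.neg_one_pow heven, one_smul] at h1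

omit hCAR in
lemma commute_conj {u v C : A} (hsign : u*v = v*u ∨ u*v = -(v*u))
    (hstar : star v = v ∨ star v = -v) (hC : Commute u C) :
    Commute u (star v * C * v) := by
  have h0 : Commute u (v * C * v) := by
    rcases hsign with hs | hs
    · have hc : Commute u v := hs
      exact (hc.mul_right hC).mul_right hc
    · show u * (v * C * v) = (v * C * v) * u
      calc u * (v * C * v) = (u * v) * (C * v) := by noncomm_ring
        _ = -((v * u) * (C * v)) := by rw [hs, neg_mul]
        _ = -(v * ((u * C) * v)) := by noncomm_ring
        _ = -(v * ((C * u) * v)) := by rw [hC.eq]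
        _ = -(v * (C * (u * v))) := by noncomm_ring
        _ = -(v * (C * (-(v * u)))) := by rw [hs]
        _ = (v * C * v) * u := by noncomm_ring
  rcases hstar with hv | hv
  · rwa [hv]
  · rw [hv]
    have e : -v * C * v = -(v * C * v) := by noncomm_ring
    rw [e]
    exact h0.neg_right

end Stage2

section Stage3
open CARaux
variable {Γ A : Type*} [Ring A] [StarRing A] [Algebra ℂ A] (a : Γ → A)

/-- The one-site averaging operation. -/
noncomputable def Tstep (x : Γ) (C : A) : A :=
  (4:ℂ)⁻¹ • ∑ k : Fin 4, star (uFactor a k x) * C * uFactor a k x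

variable {a}

lemma uProd_cons (y : Γ) (l : List Γ) (α : Fin (l.length + 1) → Fin 4) :
    uProd a (y::l) α = uFactor a (α 0) y * uProd a l (fun i => α i.succ) := by
  simp [uProd, List.ofFn_succ]

lemma condExp_nil (B : A) : condExp a [] B = B := by
  simp [condExp, uProd]

lemma condExp_cons (y : Γ) (l : List Γ) (B : A) :
    condExp a (y::l) B = condExp a l (Tstep a y B) := by
  have lhs : condExp a (y::l) B = ((4:ℂ)^(l.length+1))⁻¹ •
      ∑ α : Fin (l.length+1) → Fin 4, star (uProd a (y::l) α) * B * uProd a (y::l) α := rfl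
  rw [lhs]
  rw [Fintype.sum_equiv (Fin.consEquiv (fun _ : Fin (l.length+1) => Fin 4)).symm
    (fun α => star (uProd a (y::l) α) * B * uProd a (y::l) α)
    (fun p => star (uProd a l p.2) * (star (uFactor a p.1 y) * B * uFactor a p.1 y)
      * uProd a l p.2)
    (fun α => by
      simp only [Fin.consEquiv, Equiv.coe_fn_symm_mk, Fin.tail, uProd_cons, star_mul]
      noncomm_ring)]
  rw [Fintype.sum_prod_type, Finset.sum_comm, condExp, Tstep]
  simp only [mul_smul_comm, smul_mul_assoc, Finset.mul_sum, Finset.sum_mul]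
  rw [← Finset.smul_sum, smul_smul]
  congr 1
  rw [pow_succ, mul_inv]

end Stage3

section Stage4
open CARaux
variable {Γ A : Type*} [Ring A] [StarRing A] [Algebra ℂ A]

noncomputable def condExpL (a : Γ → A) (l : List Γ) (B : A) : A :=
  l.foldl (fun C x => Tstep a x C) B

variable {a : Γ → A}

lemma condExpL_cons (x : Γ) (l : List Γ) (B : A) :
    condExpL a (x::l) B = condExpL a l (Tstep a x B) := rfl

lemma condExp_eq_condExpL (l : List Γ) (B : A) : condExp a l B = condExpL a l B := by
  induction l generalizing B with
  | nil => exact condExp_nil B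
  | cons x l ih => rw [condExp_cons, condExpL_cons, ih]

lemma condExpL_append (l₁ l₂ : List Γ) (B : A) :
    condExpL a (l₁ ++ l₂) B = condExpL a l₂ (condExpL a l₁ B) :=
  List.foldl_append ..

lemma commute_uFactor_star {x : Γ} {k : Fin 4} {D : A}
    (hD : Commute (uFactor a k x) D) : Commute (star (uFactor a k x)) D := by
  rcases uFactor_star (a := a) k x with h | h
  · rw [h]; exact hD
  · rw [h]; exact hD.neg_left

lemma Tstep_mul_right {x : Γ} {B₀ : A} (hB : ∀ k, Commute (uFactor a k x) B₀) (C : A) :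
    Tstep a x (C * B₀) = Tstep a x C * B₀ := by
  unfold Tstep
  rw [smul_mul_assoc, Finset.sum_mul]
  congr 1
  apply Finset.sum_congr rfl
  intro k _
  have h1 : star (uFactor a k x) * (C * B₀) * uFactor a k x
      = (star (uFactor a k x) * C) * (B₀ * uFactor a k x) := by noncomm_ring
  rw [h1, ← (hB k).eq]
  noncomm_ring

lemma Tstep_mul_left {x : Γ} {D : A} (hD : ∀ k, Commute (uFactor a k x) D) (C : A) :
    Tstep a x (D * C) = D * Tstep a x C := by
  unfold Tstep
  rw [mul_smul_comm, Finset.mul_sum]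
  congr 1
  apply Finset.sum_congr rfl
  intro k _
  have h1 : star (uFactor a k x) * (D * C) * uFactor a k x
      = (star (uFactor a k x) * D) * (C * uFactor a k x) := by noncomm_ring
  rw [h1, (commute_uFactor_star (hD k)).eq]
  noncomm_ring

lemma conj_conj_swap {u v C : A} (hsign : u*v = v*u ∨ u*v = -(v*u)) :
    star u * (star v * C * v) * u = star v * (star u * C * u) * v := by
  rcases hsign with hs | hs
  · have h2 : star v * star u = star u * star v := by rw [← star_mul, hs, star_mul]
    calc star u * (star v * C * v) * u = (star u * star v) * C * (v * u) := by noncomm_ring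
      _ = (star v * star u) * C * (u * v) := by rw [← h2, ← hs]
      _ = star v * (star u * C * u) * v := by noncomm_ring
  · have h3 : v * u = -(u * v) := by rw [hs, neg_neg]
    have h2 : star u * star v = -(star v * star u) := by
      rw [← star_mul, h3, star_neg, star_mul]
    calc star u * (star v * C * v) * u = (star u * star v) * C * (v * u) := by noncomm_ring
      _ = (-(star v * star u)) * C * (-(u * v)) := by rw [h2, h3]
      _ = star v * (star u * C * u) * v := by noncomm_ring

variable (hCAR : IsCAR a)
include hCAR

lemma Tstep_comm (x y : Γ) (C : A) : Tstep a x (Tstep a y C) = Tstep a y (Tstep a x C) := by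
  by_cases hxy : x = y
  · subst hxy; rfl
  · unfold Tstep
    simp only [Finset.mul_sum, Finset.sum_mul, mul_smul_comm, smul_mul_assoc, Finset.smul_sum,
      smul_smul]
    rw [Finset.sum_comm]
    apply Finset.sum_congr rfl
    intro j _
    apply Finset.sum_congr rfl
    intro k _
    congr 1
    exact conj_conj_swap (uFactor_signComm hCAR hxy k j)

lemma commute_Tstep {x y : Γ} (hxy : y ≠ x) {j : Fin 4} {C : A}
    (hC : Commute (uFactor a j y) C) : Commute (uFactor a j y) (Tstep a x C) := by
  unfold Tstep
  apply Commute.smul_right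
  apply Commute.sum_right
  intro k _
  exact commute_conj (uFactor_signComm hCAR hxy j k) (uFactor_star k x) hC

lemma commute_condExpL {y : Γ} {j : Fin 4} {l : List Γ} (hl : ∀ x ∈ l, x ≠ y) {C : A}
    (hC : Commute (uFactor a j y) C) : Commute (uFactor a j y) (condExpL a l C) := by
  induction l generalizing C with
  | nil => exact hC
  | cons x l ih =>
    rw [condExpL_cons]
    exact ih (fun z hz => hl z (List.mem_cons_of_mem _ hz))
      (commute_Tstep hCAR (Ne.symm (hl x (List.mem_cons_self))) hC)

lemma condExpL_perm {l₁ l₂ : List Γ} (hp : l₁.Perm l₂) (B : A) :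
    condExpL a l₁ B = condExpL a l₂ B := by
  induction hp generalizing B with
  | nil => rfl
  | cons x _ ih => rw [condExpL_cons, condExpL_cons, ih]
  | swap x y l => rw [condExpL_cons, condExpL_cons, condExpL_cons, condExpL_cons,
      Tstep_comm hCAR]
  | trans _ _ ih1 ih2 => rw [ih1, ih2]

lemma condExp_perm {l₁ l₂ : List Γ} (hp : l₁.Perm l₂) (B : A) :
    condExp a l₁ B = condExp a l₂ B := by
  rw [condExp_eq_condExpL, condExp_eq_condExpL, condExpL_perm hCAR hp]

omit hCAR in
lemma condExpL_mul_right {lA : List Γ} {B₀ : A}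
    (hB : ∀ x ∈ lA, ∀ k, Commute (uFactor a k x) B₀) (C : A) :
    condExpL a lA (C * B₀) = condExpL a lA C * B₀ := by
  induction lA generalizing C with
  | nil => rfl
  | cons x l ih =>
    rw [condExpL_cons, condExpL_cons, Tstep_mul_right (hB x (List.mem_cons_self)),
      ih (fun z hz => hB z (List.mem_cons_of_mem _ hz))]

omit hCAR in
lemma condExpL_mul_left {lB : List Γ} {D : A}
    (hD : ∀ y ∈ lB, ∀ j, Commute (uFactor a j y) D) (C : A) :
    condExpL a lB (D * C) = D * condExpL a lB C := by
  induction lB generalizing C with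
  | nil => rfl
  | cons y l ih =>
    rw [condExpL_cons, condExpL_cons, Tstep_mul_left (hD y (List.mem_cons_self)),
      ih (fun z hz => hD z (List.mem_cons_of_mem _ hz))]

lemma condExp_factor {lA lB : List Γ} {A₀ B₀ : A}
    (hd : ∀ y ∈ lB, ∀ x ∈ lA, x ≠ y)
    (hA1 : ∀ y ∈ lB, ∀ j, Commute (uFactor a j y) A₀)
    (hB1 : ∀ x ∈ lA, ∀ k, Commute (uFactor a k x) B₀) :
    condExp a (lA ++ lB) (A₀ * B₀) = condExp a lA A₀ * condExp a lB B₀ := by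
  rw [condExp_eq_condExpL, condExp_eq_condExpL, condExp_eq_condExpL, condExpL_append,
    condExpL_mul_right hB1]
  exact condExpL_mul_left
    (fun y hy j => commute_condExpL hCAR (fun x hx => hd y hy x hx) (hA1 y hy j)) _

end Stage4

open CARaux in
/-- product property of the conditional expectations: for disjoint `Z, Y ⊆ Λ`
and even observables `A₀ ∈ 𝔄_Z⁺`, `B₀ ∈ 𝔄_Y⁺`,
`𝔼_X^Λ(A₀B₀) = 𝔼_{X∪Y}^Λ(A₀) · 𝔼_{X∪Yᶜ}^Λ(B₀) = 𝔼_{X∪Zᶜ}^Λ(A₀) · 𝔼_{X∪Z}^Λ(B₀)`,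
where `Yᶜ = Λ∖Y` and `Zᶜ = Λ∖Z`. -/
theorem condExp_product_property
    {Γ A : Type*} [DecidableEq Γ]
    [NormedRing A] [StarRing A] [CStarRing A] [NormedAlgebra ℂ A]
    (a : Γ → A) (hCAR : IsCAR a)
    (Λ X Y Z : Finset Γ) (hX : X ⊆ Λ) (hY : Y ⊆ Λ) (hZ : Z ⊆ Λ) (hZY : Disjoint Z Y)
    -- enumerations of the relevant complements
    (lX : List Γ) (hlX : lX.Nodup) (hlXset : lX.toFinset = Λ \ X)
    (lXY : List Γ) (hlXY : lXY.Nodup) (hlXYset : lXY.toFinset = Λ \ (X ∪ Y))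
    (lXYc : List Γ) (hlXYc : lXYc.Nodup) (hlXYcset : lXYc.toFinset = Λ \ (X ∪ (Λ \ Y)))
    (lXZc : List Γ) (hlXZc : lXZc.Nodup) (hlXZcset : lXZc.toFinset = Λ \ (X ∪ (Λ \ Z)))
    (lXZ : List Γ) (hlXZ : lXZ.Nodup) (hlXZset : lXZ.toFinset = Λ \ (X ∪ Z))
    (A₀ B₀ : A) (hA : A₀ ∈ carSpanEven a Z) (hB : B₀ ∈ carSpanEven a Y) :
    condExp a lX (A₀ * B₀) = condExp a lXY A₀ * condExp a lXYc B₀ ∧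
    condExp a lX (A₀ * B₀) = condExp a lXZc A₀ * condExp a lXZ B₀ := by
  -- membership facts
  have hmemXY : ∀ x ∈ lXY, x ∈ Λ ∧ x ∉ X ∧ x ∉ Y := by
    intro x hx
    have : x ∈ Λ \ (X ∪ Y) := hlXYset ▸ List.mem_toFinset.mpr hx
    simp only [Finset.mem_sdiff, Finset.mem_union] at this
    tauto
  have hmemXYc : ∀ y ∈ lXYc, y ∈ Λ ∧ y ∉ X ∧ y ∈ Y := by
    intro y hy
    have : y ∈ Λ \ (X ∪ (Λ \ Y)) := hlXYcset ▸ List.mem_toFinset.mpr hy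
    simp only [Finset.mem_sdiff, Finset.mem_union] at this
    tauto
  have hmemXZc : ∀ x ∈ lXZc, x ∈ Λ ∧ x ∉ X ∧ x ∈ Z := by
    intro x hx
    have : x ∈ Λ \ (X ∪ (Λ \ Z)) := hlXZcset ▸ List.mem_toFinset.mpr hx
    simp only [Finset.mem_sdiff, Finset.mem_union] at this
    tauto
  have hmemXZ : ∀ y ∈ lXZ, y ∈ Λ ∧ y ∉ X ∧ y ∉ Z := by
    intro y hy
    have : y ∈ Λ \ (X ∪ Z) := hlXZset ▸ List.mem_toFinset.mpr hy
    simp only [Finset.mem_sdiff, Finset.mem_union] at this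
    tauto
  -- commutation of the even observables with the generators at sites outside their support
  have hAcomm : ∀ y ∉ Z, ∀ j, Commute (uFactor a j y) A₀ := by
    intro y hy j
    obtain ⟨h1, h2⟩ := commute_evenSpan hCAR hy hA
    exact commute_uFactor h1 h2 j
  have hBcomm : ∀ x ∉ Y, ∀ k, Commute (uFactor a k x) B₀ := by
    intro x hx k
    obtain ⟨h1, h2⟩ := commute_evenSpan hCAR hx hB
    exact commute_uFactor h1 h2 k
  constructor
  · -- first factorization
    have hperm : lX.Perm (lXY ++ lXYc) := by
      apply List.perm_of_nodup_nodup_toFinset_eq hlX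
      · refine List.Nodup.append hlXY hlXYc ?_
        intro w hw hw'
        obtain ⟨_, _, hwY⟩ := hmemXY w hw
        exact hwY (hmemXYc w hw').2.2
      · rw [List.toFinset_append, hlXset, hlXYset, hlXYcset]
        ext w
        simp only [Finset.mem_union, Finset.mem_sdiff]
        tauto
    rw [condExp_perm hCAR hperm]
    apply condExp_factor hCAR
    · intro y hy x hx
      rintro rfl
      exact (hmemXY x hx).2.2 (hmemXYc x hy).2.2
    · intro y hy j
      apply hAcomm
      exact fun hyZ => Finset.disjoint_left.mp hZY hyZ (hmemXYc y hy).2.2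
    · intro x hx k
      exact hBcomm x (hmemXY x hx).2.2 k
  · -- second factorization
    have hperm : lX.Perm (lXZc ++ lXZ) := by
      apply List.perm_of_nodup_nodup_toFinset_eq hlX
      · refine List.Nodup.append hlXZc hlXZ ?_
        intro w hw hw'
        exact (hmemXZ w hw').2.2 (hmemXZc w hw).2.2
      · rw [List.toFinset_append, hlXset, hlXZcset, hlXZset]
        ext w
        simp only [Finset.mem_union, Finset.mem_sdiff]
        tauto
    rw [condExp_perm hCAR hperm]
    apply condExp_factor hCAR
    · intro y hy x hx
      rintro rfl
      exact (hmemXZ x hy).2.2 (hmemXZc x hx).2.2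
    · intro y hy j
      exact hAcomm y (hmemXZ y hy).2.2 j
    · intro x hx k
      apply hBcomm
      exact fun hxY => Finset.disjoint_left.mp hZY (hmemXZc x hx).2.2 hxY
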